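/- Let h = h_L ∘ ... ∘ h_1 where each h_l(x) = x + g_l(x) and each g_l : X → X is α-Lipschitz with 0 < α ≤ 1 on a normed space X. Then for all x, x' ∈ X: (1-α)^L ‖x - x'‖ ≤ ‖h(x) - h(x')‖ ≤ (1+α)^L ‖x - x'‖. -/
import Mathlib


/-- Composition of residual blocks `h_l(x) = x + g_l(x)`:
`resComp g 0 = id`, `resComp g (n+1) = h_{n+1} ∘ resComp g n`. -/
def resComp {X : Type*} [Add X] (g : ℕ → X → X) : ℕ → X → X
  | 0 => id
  | (n + 1) => fun x => resComp g n x + g n (resComp g n x)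

theorem residual_bi_lipschitz {X : Type*} [NormedAddCommGroup X] [NormedSpace ℝ X]
    (g : ℕ → X → X) (α : ℝ) (hα0 : 0 < α) (hα1 : α ≤ 1) (L : ℕ)
    (hg : ∀ l < L, ∀ x x' : X, ‖g l x - g l x'‖ ≤ α * ‖x - x'‖) :
    ∀ x x' : X,
      (1 - α) ^ L * ‖x - x'‖ ≤ ‖resComp g L x - resComp g L x'‖ ∧
      ‖resComp g L x - resComp g L x'‖ ≤ (1 + α) ^ L * ‖x - x'‖ := by
  induction L with
  | zero => intro x x'; simp [resComp]
  | succ n ih =>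
    intro x x'
    have ihn := ih (fun l hl => hg l (Nat.lt_succ_of_lt hl)) x x'
    set a := resComp g n x
    set b := resComp g n x'
    have hgab : ‖g n a - g n b‖ ≤ α * ‖a - b‖ := hg n (Nat.lt_succ_self n) a b
    have key : resComp g (n+1) x - resComp g (n+1) x' = (a - b) + (g n a - g n b) := by
      simp [resComp]; abel
    have h1 : ‖resComp g (n+1) x - resComp g (n+1) x'‖ ≤ (1 + α) * ‖a - b‖ := by
      rw [key]
      calc ‖(a - b) + (g n a - g n b)‖ ≤ ‖a - b‖ + ‖g n a - g n b‖ := norm_add_le _ _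
        _ ≤ ‖a - b‖ + α * ‖a - b‖ := by linarith
        _ = (1 + α) * ‖a - b‖ := by ring
    have h2 : (1 - α) * ‖a - b‖ ≤ ‖resComp g (n+1) x - resComp g (n+1) x'‖ := by
      rw [key]
      have := norm_sub_norm_le (a - b) (-(g n a - g n b))
      simp only [norm_neg, sub_neg_eq_add] at this
      linarith
    have hnn : (0:ℝ) ≤ ‖x - x'‖ := norm_nonneg _
    have p1 : (0:ℝ) ≤ (1 - α) ^ n := pow_nonneg (by linarith) n
    have p2 : (0:ℝ) ≤ (1 + α) := by linarith
    constructor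
    · calc (1 - α) ^ (n+1) * ‖x - x'‖ = (1 - α) * ((1 - α) ^ n * ‖x - x'‖) := by ring
        _ ≤ (1 - α) * ‖a - b‖ := by
            apply mul_le_mul_of_nonneg_left ihn.1 (by linarith)
        _ ≤ _ := h2
    · calc ‖resComp g (n+1) x - resComp g (n+1) x'‖ ≤ (1 + α) * ‖a - b‖ := h1
        _ ≤ (1 + α) * ((1 + α) ^ n * ‖x - x'‖) := mul_le_mul_of_nonneg_left ihn.2 p2
        _ = (1 + α) ^ (n+1) * ‖x - x'‖ := by ring
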